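/- Let ρ be a quantum state on registers A₁,…,A_m and σ a quantum state on registers B₁,…,B_m (each A_i and B_i of equal dimension). Performing the SWAP test between A_i and B_i for each i ∈ [m] and accepting iff all tests succeed, the acceptance probability equals 2^{-m} Σ_{S⊆[m]} Tr(ρ_S σ_S), where ρ_S (resp. σ_S) is the reduced state of ρ (resp. σ) on the registers indexed by S. -/

import Mathlib

open Matrix
open scoped ComplexOrder Kronecker
noncomputable section

/-- Square root of a matrix: the PSD square root if the matrix is PSD, else 0. -/
noncomputable def matSqrt {n : Type*} [Fintype n] [DecidableEq n]
    (A : Matrix n n ℂ) : Matrix n n ℂ :=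
  open scoped Classical in
  if h : A.PosSemidef then
    (h.1.eigenvectorUnitary.1 * diagonal ((↑) ∘ (√·) ∘ h.1.eigenvalues) *
      (star h.1.eigenvectorUnitary : Matrix n n ℂ))
  else 0

/-- Trace norm ‖A‖₁ = Tr √(AᴴA). -/
noncomputable def traceNorm {n : Type*} [Fintype n] [DecidableEq n]
    (A : Matrix n n ℂ) : ℝ :=
  (Matrix.trace (matSqrt (Aᴴ * A))).re

/-- Trace distance TD(ρ,σ) = (1/2)‖ρ−σ‖₁. -/
noncomputable def TD {n : Type*} [Fintype n] [DecidableEq n]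
    (ρ σ : Matrix n n ℂ) : ℝ :=
  traceNorm (ρ - σ) / 2

/-- Uhlmann fidelity F(ρ,σ) = (Tr √(√σ ρ √σ))². -/
noncomputable def fidelity {n : Type*} [Fintype n] [DecidableEq n]
    (ρ σ : Matrix n n ℂ) : ℝ :=
  ((Matrix.trace (matSqrt (matSqrt σ * ρ * matSqrt σ))).re) ^ 2

/-- ρ is a density matrix: positive semidefinite with unit trace. -/
def IsDensity {n : Type*} [Fintype n] [DecidableEq n]
    (ρ : Matrix n n ℂ) : Prop :=
  ρ.PosSemidef ∧ ρ.trace = 1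

variable {m d : ℕ}

/-- Merge an assignment on registers in `S` with one on registers outside `S`. -/
def mergeFn (S : Finset (Fin m)) (a : {i // i ∈ S} → Fin d)
    (c : {i // i ∉ S} → Fin d) : Fin m → Fin d :=
  fun i => if h : i ∈ S then a ⟨i, h⟩ else c ⟨i, h⟩

/-- Reduced state ρ_S: all registers outside `S` are traced out. -/
noncomputable def reduce (S : Finset (Fin m))
    (ρ : Matrix (Fin m → Fin d) (Fin m → Fin d) ℂ) :
    Matrix ({i // i ∈ S} → Fin d) ({i // i ∈ S} → Fin d) ℂ :=
  Matrix.of fun a b => ∑ c : {i // i ∉ S} → Fin d,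
    ρ (mergeFn S a c) (mergeFn S b c)

/-- The permutation of (A,B) register assignments that swaps A_i and B_i for
every i ∈ S. -/
def swapFn (S : Finset (Fin m))
    (p : (Fin m → Fin d) × (Fin m → Fin d)) :
    (Fin m → Fin d) × (Fin m → Fin d) :=
  (fun i => if i ∈ S then p.2 i else p.1 i,
   fun i => if i ∈ S then p.1 i else p.2 i)

/-- The unitary SWAP_S swapping registers A_i ↔ B_i for i ∈ S. -/
noncomputable def swapMat (S : Finset (Fin m)) :
    Matrix ((Fin m → Fin d) × (Fin m → Fin d))
           ((Fin m → Fin d) × (Fin m → Fin d)) ℂ :=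
  Matrix.of fun p q => if p = swapFn S q then 1 else 0

/-- The projector onto the all-accept outcome of m parallel SWAP tests between
A_i and B_i (i ∈ [m]); it equals ⊗_{i∈[m]} (I + SWAP_i)/2 = 2^{-m} Σ_S SWAP_S,
so the acceptance probability is its expectation in the tested state. -/
noncomputable def swapTestAcceptProj (m d : ℕ) :
    Matrix ((Fin m → Fin d) × (Fin m → Fin d))
           ((Fin m → Fin d) × (Fin m → Fin d)) ℂ :=
  ((2 : ℂ) ^ m)⁻¹ • ∑ S : Finset (Fin m), swapMat S

lemma merge_ite (S : Finset (Fin m)) (x y : {i // i ∈ S} → Fin d)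
    (c c' : {i // i ∉ S} → Fin d) :
    (fun i => if i ∈ S then mergeFn S y c' i else mergeFn S x c i)
      = mergeFn S y c := by
  funext i
  by_cases h : i ∈ S <;> simp [mergeFn, h]

lemma trace_swapMat_kron (S : Finset (Fin m))
    (ρ σ : Matrix (Fin m → Fin d) (Fin m → Fin d) ℂ) :
    Matrix.trace (swapMat S * (ρ ⊗ₖ σ)) =
      Matrix.trace (reduce S ρ * reduce S σ) := by
  classical
  let e := Equiv.piEquivPiSubtypeProd (fun i : Fin m => i ∈ S)
      (fun _ => Fin d)
  let E := (e.prodCongr e).symm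
  have hE : ∀ (x y : {i // i ∈ S} → Fin d) (c c' : {i // i ∉ S} → Fin d),
      E ((x, c), (y, c')) = (mergeFn S x c, mergeFn S y c') := fun _ _ _ _ => rfl
  rw [Matrix.trace, Matrix.trace]
  simp only [Matrix.diag, Matrix.mul_apply, swapMat, Matrix.of_apply,
    ite_mul, one_mul, zero_mul]
  rw [Finset.sum_comm]
  simp only [Finset.sum_ite_eq', Finset.mem_univ, if_true]
  rw [← Equiv.sum_comp E (fun q => (ρ ⊗ₖ σ) q (swapFn S q))]
  simp only [Fintype.sum_prod_type]
  simp only [hE]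
  simp only [reduce, Matrix.mul_apply, Matrix.of_apply, Finset.mul_sum,
    Finset.sum_mul]
  refine Finset.sum_congr rfl fun x _ => ?_
  rw [Finset.sum_comm]
  refine Finset.sum_congr rfl fun y _ => ?_
  rw [Finset.sum_comm]
  refine Finset.sum_congr rfl fun c _ => ?_
  refine Finset.sum_congr rfl fun c' _ => ?_
  have h1 := merge_ite S x y c' c
  have h2 := merge_ite S y x c c'
  simp only [swapFn, Matrix.kroneckerMap_apply]
  rw [h1, h2]

/-- Harrow–Montanaro: performing the SWAP test between A_i and
B_i for each i ∈ [m] and accepting iff all tests succeed, the acceptance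
probability on ρ ⊗ σ equals 2^{-m} Σ_{S⊆[m]} Tr(ρ_S σ_S). -/
theorem parallel_swapTest_accept_prob
    (m d : ℕ) (ρ σ : Matrix (Fin m → Fin d) (Fin m → Fin d) ℂ)
    (hρ : IsDensity ρ) (hσ : IsDensity σ) :
    Matrix.trace (swapTestAcceptProj m d * (ρ ⊗ₖ σ)) =
      ((2 : ℂ) ^ m)⁻¹ *
        ∑ S : Finset (Fin m), Matrix.trace (reduce S ρ * reduce S σ) := by
  rw [swapTestAcceptProj, Matrix.smul_mul, Matrix.trace_smul, Matrix.sum_mul,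
    Matrix.trace_sum, smul_eq_mul]
  congr 1
  exact Finset.sum_congr rfl fun S _ => trace_swapMat_kron S ρ σ
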